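/- For all real a > 0 and s > 0, the integral converges and (1 / (√π · a^{1/4})) ∫_ℝ ( 1 − 2 e^{x/2} F(e^{x/2}) ) e^{x/2 − (s/√a) eˣ} dx = √s / ( s + √a ). -/

import Mathlib

open MeasureTheory

open Real Set Filter

noncomputable def Gg (y : ℝ) : ℝ := ∫ t in (0:ℝ)..y, Real.exp (t^2)

lemma expsq_cont : Continuous (fun t : ℝ => Real.exp (t^2)) := by continuity

lemma Gg_hasDerivAt (y : ℝ) : HasDerivAt Gg (Real.exp (y^2)) y :=
  (expsq_cont.integral_hasStrictDerivAt 0 y).hasDerivAt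

lemma Gg_cont : Continuous Gg :=
  continuous_iff_continuousAt.2 fun y => (Gg_hasDerivAt y).continuousAt

lemma Gg_nonneg {y : ℝ} (hy : 0 ≤ y) : 0 ≤ Gg y := by
  apply intervalIntegral.integral_nonneg hy
  intro t _; positivity

lemma Gg_le_mul {y : ℝ} (hy : 0 ≤ y) : Gg y ≤ y * Real.exp (y^2) := by
  have : Gg y ≤ ∫ t in (0:ℝ)..y, Real.exp (y^2) := by
    apply intervalIntegral.integral_mono_on hy
      (expsq_cont.intervalIntegrable _ _) (intervalIntegrable_const)
    intro t ht
    apply Real.exp_le_exp.2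
    have h1 : 0 ≤ t := ht.1
    have h2 : t ≤ y := ht.2
    nlinarith
  simpa [mul_comm] using this

lemma Gg_le_chord {y : ℝ} (hy : 0 < y) : y * Gg y ≤ Real.exp (y^2) - 1 := by
  have h1 : Gg y ≤ ∫ t in (0:ℝ)..y, Real.exp (y*t) := by
    apply intervalIntegral.integral_mono_on hy.le
      (expsq_cont.intervalIntegrable _ _)
      ((Real.continuous_exp.comp (continuous_const.mul continuous_id)).intervalIntegrable _ _)
    intro t ht
    simp only [Function.comp_apply, id_eq, Pi.mul_apply]
    apply Real.exp_le_exp.2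
    have := mul_nonneg ht.1 (sub_nonneg.2 ht.2)
    nlinarith
  have h2 : ∫ t in (0:ℝ)..y, Real.exp (y*t) = (Real.exp (y^2) - 1)/y := by
    rw [intervalIntegral.integral_comp_mul_left (fun t => Real.exp t) hy.ne']
    simp [integral_exp, mul_comm, smul_eq_mul, pow_two]
    ring
  calc y * Gg y ≤ y * ((Real.exp (y^2) - 1)/y) := by
        exact mul_le_mul_of_nonneg_left (h1.trans h2.le) hy.le
    _ = Real.exp (y^2) - 1 := by field_simp

/-- The Dawson function `F(x) = e^{−x²} ∫₀ˣ e^{t²} dt`. -/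
noncomputable def dawson (x : ℝ) : ℝ := Real.exp (-x ^ 2) * ∫ t in (0 : ℝ)..x, Real.exp (t ^ 2)

lemma dawson_eq (y : ℝ) : dawson y = Real.exp (-y^2) * Gg y := rfl

lemma dawson_cont : Continuous dawson := by
  have : dawson = fun y => Real.exp (-y^2) * Gg y := funext dawson_eq
  rw [this]
  exact (Real.continuous_exp.comp (continuous_pow 2).neg).mul Gg_cont

lemma dawson_nonneg {y : ℝ} (hy : 0 ≤ y) : 0 ≤ dawson y := by
  rw [dawson_eq]; exact mul_nonneg (Real.exp_pos _).le (Gg_nonneg hy)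

lemma mul_dawson_le_one {y : ℝ} (hy : 0 < y) : y * dawson y ≤ 1 := by
  have h1 := Gg_le_chord hy
  have h2 : y * dawson y = Real.exp (-y^2) * (y * Gg y) := by rw [dawson_eq]; ring
  have h3 : Real.exp (-y^2) * (y * Gg y) ≤ Real.exp (-y^2) * (Real.exp (y^2) - 1) :=
    mul_le_mul_of_nonneg_left h1 (Real.exp_pos _).le
  have h4 : Real.exp (-y^2) * (Real.exp (y^2) - 1) = 1 - Real.exp (-y^2) := by
    rw [mul_sub, ← Real.exp_add]
    simp
  have h5 : 0 < Real.exp (-y^2) := Real.exp_pos _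
  linarith [h2 ▸ h3]

lemma abs_bound {y : ℝ} (hy : 0 < y) : |1 - 2 * y * dawson y| ≤ 1 := by
  have h1 := mul_dawson_le_one hy
  have h2 : 0 ≤ y * dawson y := mul_nonneg hy.le (dawson_nonneg hy.le)
  rw [abs_le]
  constructor <;> nlinarith

lemma tendsto_mul_exp_neg_sq {c : ℝ} (hc : 0 < c) :
    Tendsto (fun y : ℝ => y * Real.exp (-c * y^2)) atTop (nhds 0) := by
  apply squeeze_zero' (g := fun y : ℝ => y ^ (1:ℝ) * Real.exp (-c * y))
  · filter_upwards [eventually_ge_atTop 0] with y hy; positivity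
  · filter_upwards [eventually_ge_atTop 1] with y hy
    rw [Real.rpow_one]
    apply mul_le_mul_of_nonneg_left _ (by linarith)
    apply Real.exp_le_exp.2
    nlinarith [mul_nonneg (mul_nonneg hc.le (by linarith : (0:ℝ) ≤ y)) (by linarith : (0:ℝ) ≤ y - 1)]
  · exact tendsto_rpow_mul_exp_neg_mul_atTop_nhds_zero 1 c hc

lemma sq_exp_bound {c : ℝ} (hc : 0 < c) (y : ℝ) :
    y^2 * Real.exp (-c * y^2) ≤ (2/c) * Real.exp (-(c/2) * y^2) := by
  have h2 : (c/2)*y^2 ≤ Real.exp ((c/2)*y^2) := by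
    have := Real.add_one_le_exp ((c/2) * y^2)
    linarith
  have h1 : y^2 ≤ (2/c) * Real.exp ((c/2) * y^2) := by
    calc y^2 = (2/c) * ((c/2)*y^2) := by field_simp
      _ ≤ _ := mul_le_mul_of_nonneg_left h2 (by positivity)
  calc y^2 * Real.exp (-c*y^2) ≤ ((2/c) * Real.exp ((c/2)*y^2)) * Real.exp (-c*y^2) :=
      mul_le_mul_of_nonneg_right h1 (Real.exp_pos _).le
    _ = (2/c) * Real.exp (-(c/2)*y^2) := by
      rw [mul_assoc, ← Real.exp_add]; ring_nf

lemma B_integrable {c : ℝ} (hc : 0 < c) :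
    IntegrableOn (fun y : ℝ => y * Real.exp (-(1+c) * y^2) * Gg y) (Ioi 0) := by
  apply Integrable.mono' (((integrable_exp_neg_mul_sq (half_pos hc)).const_mul (2/c)).integrableOn)
  · apply Continuous.aestronglyMeasurable
    exact (continuous_id.mul (Real.continuous_exp.comp (by continuity))).mul Gg_cont
  · filter_upwards [ae_restrict_mem measurableSet_Ioi] with y hy
    have hy0 : (0:ℝ) < y := hy
    have hGn := Gg_nonneg hy0.le
    have hB0 : 0 ≤ y * Real.exp (-(1+c)*y^2) * Gg y := by positivity
    rw [Real.norm_eq_abs, abs_of_nonneg hB0]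
    have h1 : y * Real.exp (-(1+c)*y^2) * Gg y ≤ y * Real.exp (-(1+c)*y^2) * (y * Real.exp (y^2)) :=
      mul_le_mul_of_nonneg_left (Gg_le_mul hy0.le) (by positivity)
    have hE : Real.exp (-(1+c)*y^2) * Real.exp (y^2) = Real.exp (-c*y^2) := by
      rw [← Real.exp_add]; ring_nf
    have h2 : y * Real.exp (-(1+c)*y^2) * (y * Real.exp (y^2)) = y^2 * Real.exp (-c*y^2) := by
      calc y * Real.exp (-(1+c)*y^2) * (y * Real.exp (y^2))
          = y^2 * (Real.exp (-(1+c)*y^2) * Real.exp (y^2)) := by ring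
        _ = y^2 * Real.exp (-c*y^2) := by rw [hE]
    exact (h1.trans_eq h2).trans (sq_exp_bound hc y)

lemma B_integral {c : ℝ} (hc : 0 < c) :
    ∫ y in Ioi (0:ℝ), y * Real.exp (-(1+c) * y^2) * Gg y
      = (1/(2*(1+c))) * ∫ y in Ioi (0:ℝ), Real.exp (-c * y^2) := by
  have h1c : (0:ℝ) < 1 + c := by linarith
  set K : ℝ := -(1/(2*(1+c))) with hK
  have hH : ∀ y : ℝ, HasDerivAt (fun y => K * (Real.exp (-(1+c)*y^2) * Gg y))
      (y * Real.exp (-(1+c)*y^2) * Gg y - (1/(2*(1+c))) * Real.exp (-c*y^2)) y := by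
    intro y
    have hin : HasDerivAt (fun y : ℝ => -(1+c)*y^2) (-(1+c)*(2*y)) y := by
      simpa using ((hasDerivAt_pow 2 y).const_mul (-(1+c)))
    have hexp := hin.exp
    have hd := ((hexp.mul (Gg_hasDerivAt y)).const_mul K)
    refine hd.congr_deriv ?_
    have hE : Real.exp (-(1+c)*y^2) * Real.exp (y^2) = Real.exp (-c*y^2) := by
      rw [← Real.exp_add]; ring_nf
    rw [hK, ← hE]
    field_simp
    ring
  have htend : Tendsto (fun y : ℝ => K * (Real.exp (-(1+c)*y^2) * Gg y)) atTop (nhds 0) := by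
    have h0 : Tendsto (fun y : ℝ => |K| * (y * Real.exp (-c*y^2))) atTop (nhds 0) := by
      simpa using (tendsto_mul_exp_neg_sq hc).const_mul |K|
    apply squeeze_zero_norm' _ h0
    filter_upwards [eventually_ge_atTop 0] with y hy
    have hGn := Gg_nonneg hy
    have h1 : Real.exp (-(1+c)*y^2) * Gg y ≤ y * Real.exp (-c*y^2) := by
      have := mul_le_mul_of_nonneg_left (Gg_le_mul hy) (Real.exp_pos (-(1+c)*y^2)).le
      have hE : Real.exp (-(1+c)*y^2) * Real.exp (y^2) = Real.exp (-c*y^2) := by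
        rw [← Real.exp_add]; ring_nf
      calc Real.exp (-(1+c)*y^2) * Gg y ≤ Real.exp (-(1+c)*y^2) * (y * Real.exp (y^2)) := this
        _ = y * (Real.exp (-(1+c)*y^2) * Real.exp (y^2)) := by ring
        _ = y * Real.exp (-c*y^2) := by rw [hE]
    have h2 : 0 ≤ Real.exp (-(1+c)*y^2) * Gg y := by positivity
    rw [Real.norm_eq_abs, abs_mul, abs_of_nonneg h2]
    exact mul_le_mul_of_nonneg_left h1 (abs_nonneg K)
  have hEc : IntegrableOn (fun y : ℝ => (1/(2*(1+c))) * Real.exp (-c * y^2)) (Ioi 0) :=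
    ((integrable_exp_neg_mul_sq hc).const_mul _).integrableOn
  have hBint := B_integrable hc
  have hint : IntegrableOn (fun y : ℝ =>
      y * Real.exp (-(1+c)*y^2) * Gg y - (1/(2*(1+c))) * Real.exp (-c*y^2)) (Ioi 0) :=
    hBint.sub hEc
  have h0 : K * (Real.exp (-(1+c)*0^2) * Gg 0) = 0 := by
    simp [Gg, intervalIntegral.integral_same]
  have key := integral_Ioi_of_hasDerivAt_of_tendsto' (fun y _ => hH y) hint htend
  rw [h0, sub_zero, integral_sub hBint hEc, integral_const_mul] at key
  have := sub_eq_zero.1 key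
  rw [this]

lemma g_integrable {c : ℝ} (hc : 0 < c) :
    IntegrableOn (fun y : ℝ => 2 * ((1 - 2*y*dawson y) * Real.exp (-c * y^2))) (Ioi 0) := by
  apply Integrable.mono' (((integrable_exp_neg_mul_sq hc).const_mul 2).integrableOn)
  · apply Continuous.aestronglyMeasurable
    exact continuous_const.mul
      ((continuous_const.sub ((continuous_const.mul continuous_id).mul dawson_cont)).mul
        (Real.continuous_exp.comp (by continuity)))
  · filter_upwards [ae_restrict_mem measurableSet_Ioi] with y hy
    have h := abs_bound (show (0:ℝ) < y from hy)
    have hE := (Real.exp_pos (-c*y^2)).le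
    have hnorm : ‖2 * ((1 - 2*y*dawson y) * Real.exp (-c*y^2))‖
        = 2 * (|1 - 2*y*dawson y| * Real.exp (-c*y^2)) := by
      rw [Real.norm_eq_abs, abs_mul, abs_mul, abs_of_nonneg hE, abs_two]
    rw [hnorm]
    nlinarith [mul_le_mul_of_nonneg_right h hE]

lemma g_integral {c : ℝ} (hc : 0 < c) :
    ∫ y in Ioi (0:ℝ), 2 * ((1 - 2*y*dawson y) * Real.exp (-c * y^2))
      = Real.sqrt (Real.pi / c) * (c / (1+c)) := by
  have h1c : (0:ℝ) < 1 + c := by linarith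
  have hfeq : (fun y : ℝ => 2 * ((1 - 2*y*dawson y) * Real.exp (-c * y^2)))
      = fun y => 2 * Real.exp (-c*y^2) - 4 * (y * Real.exp (-(1+c)*y^2) * Gg y) := by
    funext y
    rw [dawson_eq]
    have hE : Real.exp (-(1+c)*y^2) = Real.exp (-y^2) * Real.exp (-c*y^2) := by
      rw [← Real.exp_add]; ring_nf
    rw [hE]; ring
  rw [hfeq, integral_sub (((integrable_exp_neg_mul_sq hc).const_mul 2).integrableOn)
      ((B_integrable hc).const_mul 4),
    integral_const_mul, integral_const_mul, B_integral hc, integral_gaussian_Ioi]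
  field_simp
  ring

lemma final_alg (a s : ℝ) (ha : 0 < a) (hs : 0 < s) :
    (1 / (Real.sqrt Real.pi * a ^ ((1:ℝ)/4))) *
      (Real.sqrt (Real.pi / (s / Real.sqrt a)) * ((s / Real.sqrt a) / (1 + s / Real.sqrt a)))
      = Real.sqrt s / (s + Real.sqrt a) := by
  have hsa : 0 < Real.sqrt a := Real.sqrt_pos.2 ha
  have hr0 : 0 < a ^ ((1:ℝ)/4) := Real.rpow_pos_of_pos ha _
  have hr2 : a ^ ((1:ℝ)/4) * a ^ ((1:ℝ)/4) = Real.sqrt a := by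
    rw [← Real.rpow_add ha, Real.sqrt_eq_rpow]; norm_num
  have hπ : 0 < Real.sqrt Real.pi := Real.sqrt_pos.2 Real.pi_pos
  have hss : Real.sqrt s * Real.sqrt s = s := Real.mul_self_sqrt hs.le
  have hu : 0 < Real.sqrt s := Real.sqrt_pos.2 hs
  have h1 : Real.pi / (s / Real.sqrt a) = (Real.pi * Real.sqrt a) / s := by
    field_simp
  have h2 : Real.sqrt (Real.pi * Real.sqrt a / s)
      = Real.sqrt Real.pi * a ^ ((1:ℝ)/4) / Real.sqrt s := by
    rw [Real.sqrt_div (mul_nonneg Real.pi_pos.le hsa.le), Real.sqrt_mul Real.pi_pos.le,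
      ← hr2, Real.sqrt_mul_self hr0.le]
  have hden : 1 + s / Real.sqrt a = (Real.sqrt a + s)/Real.sqrt a := by field_simp
  rw [h1, h2, hden, ← hss, ← hr2]
  have h3 : (0:ℝ) < a ^ ((1:ℝ)/4) * a ^ ((1:ℝ)/4) + Real.sqrt s * Real.sqrt s := by positivity
  field_simp
  have h4 : Real.sqrt (Real.sqrt s ^ 2) = Real.sqrt s := Real.sqrt_sq hu.le
  rw [h4]
  ring

/-- for `a, s > 0`,
`(1/(√π a^{1/4})) ∫_ℝ (1 − 2 e^{x/2} F(e^{x/2})) e^{x/2 − (s/√a) eˣ} dx = √s / (s + √a)`. -/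
theorem integral_rep_scaling_substituted (a s : ℝ) (ha : 0 < a) (hs : 0 < s) :
    Integrable
      (fun x : ℝ => (1 - 2 * Real.exp (x / 2) * dawson (Real.exp (x / 2))) *
        Real.exp (x / 2 - s / Real.sqrt a * Real.exp x)) ∧
      (1 / (Real.sqrt Real.pi * a ^ ((1 : ℝ) / 4))) *
        ∫ x : ℝ, (1 - 2 * Real.exp (x / 2) * dawson (Real.exp (x / 2))) *
          Real.exp (x / 2 - s / Real.sqrt a * Real.exp x)
        = Real.sqrt s / (s + Real.sqrt a) := by
  have hsa : 0 < Real.sqrt a := Real.sqrt_pos.2 ha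
  have hc : 0 < s / Real.sqrt a := div_pos hs hsa
  set c : ℝ := s / Real.sqrt a with hcdef
  set F : ℝ → ℝ := fun x : ℝ => (1 - 2 * Real.exp (x / 2) * dawson (Real.exp (x / 2))) *
        Real.exp (x / 2 - c * Real.exp x) with hF
  have himg : (fun y : ℝ => 2 * Real.log y) '' Ioi 0 = univ := by
    apply eq_univ_of_forall
    intro x
    refine ⟨Real.exp (x/2), Real.exp_pos _, ?_⟩
    simp only [Real.log_exp]
    ring
  have hder : ∀ y ∈ Ioi (0:ℝ), HasDerivWithinAt (fun y : ℝ => 2 * Real.log y) (2 * y⁻¹) (Ioi 0) y :=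
    fun y hy => ((Real.hasDerivAt_log (ne_of_gt hy)).const_mul 2).hasDerivWithinAt
  have hinj : InjOn (fun y : ℝ => 2 * Real.log y) (Ioi 0) := by
    intro y1 h1 y2 h2 h
    have h' : Real.log y1 = Real.log y2 := by
      dsimp at h; linarith
    calc y1 = Real.exp (Real.log y1) := (Real.exp_log h1).symm
      _ = Real.exp (Real.log y2) := by rw [h']
      _ = y2 := Real.exp_log h2
  have hkey : EqOn (fun y : ℝ => |2 * y⁻¹| • F (2 * Real.log y))
      (fun y : ℝ => 2 * ((1 - 2*y*dawson y) * Real.exp (-c * y^2))) (Ioi 0) := by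
    intro y hy
    have hy0 : (0:ℝ) < y := hy
    have hl : Real.exp ((2*Real.log y)/2) = y := by
      have he : (2*Real.log y)/2 = Real.log y := by ring
      rw [he, Real.exp_log hy0]
    have hl2 : Real.exp (2*Real.log y) = y^2 := by
      rw [two_mul, Real.exp_add, Real.exp_log hy0]; ring
    have habs : |2*y⁻¹| = 2*y⁻¹ := abs_of_pos (by positivity)
    have h3 : (2*Real.log y)/2 - c * Real.exp (2*Real.log y) = Real.log y + (-c*y^2) := by
      rw [hl2]; ring
    simp only [hF, smul_eq_mul]
    rw [habs, hl, h3, Real.exp_add, Real.exp_log hy0]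
    field_simp
  have hFint : Integrable F := by
    rw [← integrableOn_univ, ← himg,
      integrableOn_image_iff_integrableOn_abs_deriv_smul measurableSet_Ioi hder hinj]
    exact (g_integrable hc).congr_fun (fun y hy => (hkey hy).symm) measurableSet_Ioi
  refine ⟨hFint, ?_⟩
  have hval : ∫ x : ℝ, F x = Real.sqrt (Real.pi / c) * (c / (1+c)) := by
    rw [← setIntegral_univ, ← himg,
      integral_image_eq_integral_abs_deriv_smul measurableSet_Ioi hder hinj,
      setIntegral_congr_fun measurableSet_Ioi hkey, g_integral hc]
  rw [hval]
  exact final_alg a s ha hs
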